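/- Let p = (p_1, …, p_n) be positive integers, L = L(p) the abelian group with generators x_1, …, x_n, c and relations p_i x_i = c, and L_+ the submonoid of L generated by x_1, …, x_n. Then L_+ ∩ (−L_+) = {0}; consequently the relation defined by x ≤ y if and only if y − x ∈ L_+ is a partial order on L. -/

import Mathlib

/-- The relations subgroup: generated by `p i • x i - c`. -/
def GLrel (n : ℕ) (p : Fin n → ℕ) : AddSubgroup (FreeAbelianGroup (Fin n ⊕ Unit)) :=
  AddSubgroup.closure
    (Set.range fun i : Fin n =>
      (p i : ℤ) • FreeAbelianGroup.of (Sum.inl i) - FreeAbelianGroup.of (Sum.inr ()))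

/-- The abelian group `L(p)` with generators `x_1, …, x_n, c` and relations `p_i x_i = c`. -/
def GLgroup (n : ℕ) (p : Fin n → ℕ) : Type :=
  FreeAbelianGroup (Fin n ⊕ Unit) ⧸ GLrel n p

instance (n : ℕ) (p : Fin n → ℕ) : AddCommGroup (GLgroup n p) :=
  QuotientAddGroup.Quotient.addCommGroup _

/-- The generator `x i` of `L(p)`. -/
def GLx (n : ℕ) (p : Fin n → ℕ) (i : Fin n) : GLgroup n p :=
  QuotientAddGroup.mk (FreeAbelianGroup.of (Sum.inl i))

/-- The generator `c` of `L(p)`. -/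
def GLc (n : ℕ) (p : Fin n → ℕ) : GLgroup n p :=
  QuotientAddGroup.mk (FreeAbelianGroup.of (Sum.inr ()))

/-- The submonoid `L_+` of `L(p)` generated by `x_1, …, x_n`. -/
def GLplus (n : ℕ) (p : Fin n → ℕ) : AddSubmonoid (GLgroup n p) :=
  AddSubmonoid.closure (Set.range (GLx n p))

noncomputable def GLphi (n : ℕ) (p : Fin n → ℕ) (hp : ∀ i, 0 < p i) : GLgroup n p →+ ℚ :=
  QuotientAddGroup.lift (GLrel n p)
    (FreeAbelianGroup.lift (Sum.elim (fun i => ((p i : ℚ))⁻¹) (fun _ => 1)))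
    (by
      intro x hx
      have : GLrel n p ≤ (FreeAbelianGroup.lift
          (Sum.elim (fun i => ((p i : ℚ))⁻¹) (fun _ => (1:ℚ)))).ker := by
        rw [GLrel, AddSubgroup.closure_le]
        rintro _ ⟨i, rfl⟩
        have hpi : (p i : ℚ) ≠ 0 := Nat.cast_ne_zero.mpr (hp i).ne'
        simp [AddMonoidHom.mem_ker, mul_inv_cancel₀ hpi]
      exact this hx)

theorem GLphi_x (n : ℕ) (p : Fin n → ℕ) (hp : ∀ i, 0 < p i) (i : Fin n) :
    GLphi n p hp (GLx n p i) = (p i : ℚ)⁻¹ := by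
  show QuotientAddGroup.lift _ _ _ (QuotientAddGroup.mk _) = _
  rw [QuotientAddGroup.lift_mk]
  simp

theorem statement_14 (n : ℕ) (p : Fin n → ℕ) (hp : ∀ i, 0 < p i) :
    (∀ z : GLgroup n p, z ∈ GLplus n p → -z ∈ GLplus n p → z = 0) ∧
    IsPartialOrder (GLgroup n p) (fun x y => y - x ∈ GLplus n p) := by
  set φ := GLphi n p hp with hφ
  have hnonneg : ∀ z ∈ GLplus n p, 0 ≤ φ z := by
    intro z hz
    induction hz using AddSubmonoid.closure_induction with
    | mem w hw =>
      obtain ⟨i, rfl⟩ := hw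
      rw [GLphi_x]
      positivity
    | zero => simp
    | add a b _ _ ha hb => rw [map_add]; exact add_nonneg ha hb
  have hzero : ∀ z ∈ GLplus n p, φ z = 0 → z = 0 := by
    intro z hz
    induction hz using AddSubmonoid.closure_induction with
    | mem w hw =>
      intro h0
      obtain ⟨i, rfl⟩ := hw
      rw [GLphi_x] at h0
      have hpi : (0:ℚ) < p i := by exact_mod_cast hp i
      exact absurd h0 (ne_of_gt (inv_pos.mpr hpi))
    | zero => intro; rfl
    | add a b ha hb iha ihb =>
      intro h0
      rw [map_add] at h0
      have h1 : φ a = 0 := le_antisymm (by linarith [hnonneg b hb]) (hnonneg a ha)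
      have h2 : φ b = 0 := by linarith
      rw [iha h1, ihb h2, add_zero]
  have key : ∀ z : GLgroup n p, z ∈ GLplus n p → -z ∈ GLplus n p → z = 0 := by
    intro z hz hz'
    have h1 := hnonneg z hz
    have h2 := hnonneg _ hz'
    rw [map_neg] at h2
    exact hzero z hz (le_antisymm (by linarith) h1)
  refine ⟨key, ?_⟩
  haveI hr : IsRefl (GLgroup n p) (fun x y => y - x ∈ GLplus n p) := ⟨fun x => by simpa using (GLplus n p).zero_mem⟩
  haveI ht : IsTrans (GLgroup n p) (fun x y => y - x ∈ GLplus n p) :=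
    ⟨fun x y z hxy hyz => by simpa using AddSubmonoid.add_mem _ hyz hxy⟩
  haveI ha : IsAntisymm (GLgroup n p) (fun x y => y - x ∈ GLplus n p) := by
    refine ⟨fun x y hxy hyx => ?_⟩
    have h : y - x = 0 := key _ hxy (by simpa [neg_sub] using hyx)
    exact (sub_eq_zero.mp h).symm
  haveI : IsPreorder (GLgroup n p) (fun x y => y - x ∈ GLplus n p) := {}
  exact {}
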